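/- Let a, b > 0 be real numbers. Then a·log(a/(a+b)) + b·log(b/(a+b)) ≥ −(a + b)·log 2, with equality if and only if a = b. (This is the pointwise inequality which, integrated over the joint space, shows that the GAN value function at the optimal discriminator equals −log 4 plus twice the Jensen–Shannon divergence and is minimized exactly when the encoder joint distribution q(x,z) matches the generator joint distribution p(x,z), i.e., the 'if and only if' in Theorem 1.) -/
import Mathlib


open Real

/-- Pointwise Jensen–Shannon inequality: for `a, b > 0`,
`a·log(a/(a+b)) + b·log(b/(a+b)) ≥ −(a+b)·log 2`, with equality iff `a = b`. -/
theorem stmt_13 (a b : ℝ) (ha : 0 < a) (hb : 0 < b) :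
    -(a + b) * log 2 ≤ a * log (a / (a + b)) + b * log (b / (a + b)) ∧
    (a * log (a / (a + b)) + b * log (b / (a + b)) = -(a + b) * log 2 ↔ a = b) := by
  have hab : (0:ℝ) < a + b := by linarith
  have h1 : a * log (a / (a + b)) = a * log a - a * log (a + b) := by
    rw [log_div ha.ne' hab.ne']; ring
  have h2 : b * log (b / (a + b)) = b * log b - b * log (a + b) := by
    rw [log_div hb.ne' hab.ne']; ring
  have hlogm : log ((a + b) / 2) = log (a + b) - log 2 := by
    rw [log_div hab.ne' two_ne_zero]
  have hca : a ∈ Set.Ici (0:ℝ) := le_of_lt ha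
  have hcb : b ∈ Set.Ici (0:ℝ) := le_of_lt hb
  have hsum : (1/2 : ℝ) + 1/2 = 1 := by norm_num
  have hle : ((1/2:ℝ) * a + (1/2:ℝ) * b) * log ((1/2:ℝ) * a + (1/2:ℝ) * b)
      ≤ (1/2:ℝ) * (a * log a) + (1/2:ℝ) * (b * log b) := by
    have := Real.strictConvexOn_mul_log.convexOn.2 hca hcb (by norm_num) (by norm_num) hsum
    simpa using this
  have hmid : (1/2:ℝ) * a + (1/2:ℝ) * b = (a + b) / 2 := by ring
  rw [hmid] at hle
  have hstrict : a ≠ b →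
      ((a + b) / 2) * log ((a + b) / 2)
        < (1/2:ℝ) * (a * log a) + (1/2:ℝ) * (b * log b) := by
    intro hne
    have h := Real.strictConvexOn_mul_log.2 hca hcb hne (by norm_num : (0:ℝ) < 1/2)
      (by norm_num : (0:ℝ) < 1/2) hsum
    simp only [smul_eq_mul] at h
    have e : (1/2:ℝ) * a + (1/2:ℝ) * b = (a + b) / 2 := by ring
    rw [e] at h
    exact h
  constructor
  · nlinarith [hle]
  · constructor
    · intro heq
      by_contra hne
      have := hstrict hne
      nlinarith
    · intro heq
      subst heq
      have : log (a / (a + a)) = - log 2 := by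
        have : a / (a + a) = 1/2 := by field_simp; ring
        rw [this, log_div one_ne_zero two_ne_zero, log_one]; ring
      rw [this]
      ring
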